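/- arXiv:1710.02317 — 5 statements merged into one kernel-verified Lean document; each statement's English description precedes it below -/
import Mathlib

section
/- Let G be a directed graph and let G' be obtained from G by replacing every node v by two nodes Head(v) and Tail(v), adding an edge from Head(v) to Tail(v), redirecting all edges incoming to v so that they enter Head(v), and all edges leaving v so that they leave Tail(v). Then for nodes s, t of G and k ∈ ℕ, there exists a simple path (no repeated nodes) of length k from s to t in G if and only if there exists a trail (no repeated edges) of length 2k + 1 from Head(s) to Tail(t) in G'. -/
/-- Edge relation of the split graph `G'`: each node `v` becomes `Head v = Sum.inl v`
and `Tail v = Sum.inr v`; there is an edge `Head v → Tail v`, and every edge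
`(u,v)` of `G` becomes an edge `Tail u → Head v`. -/
def SplitEdge {V : Type*} (E : V → V → Prop) : V ⊕ V → V ⊕ V → Prop
  | Sum.inl v, Sum.inr w => v = w
  | Sum.inr u, Sum.inl v => E u v
  | _, _ => False

/-- The list of nodes of the split graph corresponding to a path in `G`. -/
def splitList {V : Type*} : List V → List (V ⊕ V)
  | [] => []
  | v :: p => Sum.inl v :: Sum.inr v :: splitList p

lemma splitList_length {V : Type*} (p : List V) :
    (splitList p).length = 2 * p.length := by
  induction p with
  | nil => simp [splitList]
  | cons v p ih => simp [splitList, ih]; ring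

lemma splitList_head? {V : Type*} (p : List V) :
    (splitList p).head? = p.head?.map Sum.inl := by
  cases p <;> simp [splitList]

lemma splitList_getLast? {V : Type*} (p : List V) :
    (splitList p).getLast? = p.getLast?.map Sum.inr := by
  induction p with
  | nil => simp [splitList]
  | cons v p ih =>
    cases p with
    | nil => simp [splitList]
    | cons w p =>
      have h3 : splitList (w :: p) = Sum.inl w :: Sum.inr w :: splitList p := rfl
      rw [show splitList (v :: w :: p) = Sum.inl v :: Sum.inr v :: splitList (w :: p) from rfl,
        h3, List.getLast?_cons_cons, List.getLast?_cons_cons, ← h3, ih,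
        List.getLast?_cons_cons]

lemma splitList_chain' {V : Type*} (E : V → V → Prop) (p : List V) :
    List.Chain' (SplitEdge E) (splitList p) ↔ List.Chain' E p := by
  induction p with
  | nil => simp [splitList, List.Chain']
  | cons v p ih =>
    cases p with
    | nil => simp [splitList, SplitEdge, List.Chain']
    | cons w p =>
      have h3 : splitList (w :: p) = Sum.inl w :: Sum.inr w :: splitList p := rfl
      rw [show splitList (v :: w :: p) = Sum.inl v :: Sum.inr v :: splitList (w :: p) from rfl,
        h3, List.Chain', List.isChain_cons_cons, List.isChain_cons_cons, ← h3, ← List.Chain', ih, List.Chain', List.Chain', List.isChain_cons_cons]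
      simp [SplitEdge]

lemma mem_splitList_inl {V : Type*} (p : List V) (w : V) :
    Sum.inl w ∈ splitList p ↔ w ∈ p := by
  induction p with
  | nil => simp [splitList]
  | cons v p ih => simp [splitList, ih]

lemma mem_splitList_inr {V : Type*} (p : List V) (w : V) :
    Sum.inr w ∈ splitList p ↔ w ∈ p := by
  induction p with
  | nil => simp [splitList]
  | cons v p ih => simp [splitList, ih]

lemma splitList_nodup {V : Type*} {p : List V} (h : p.Nodup) :
    (splitList p).Nodup := by
  induction p with
  | nil => simp [splitList]
  | cons v p ih =>
    simp only [splitList, List.nodup_cons] at h ⊢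
    refine ⟨?_, ?_, ih h.2⟩
    · simp [mem_splitList_inl, h.1]
    · simp [mem_splitList_inr, h.1]

lemma map_fst_zip_tail {α : Type*} (q : List α) :
    ((q.zip q.tail).map Prod.fst) = q.dropLast := by
  induction q with
  | nil => simp
  | cons a q ih =>
    cases q with
    | nil => simp
    | cons b q =>
      simp only [List.tail_cons, List.zip_cons_cons, List.map_cons] at ih ⊢
      rw [ih]
      simp

lemma zip_tail_nodup {α : Type*} {q : List α} (h : q.Nodup) :
    (q.zip q.tail).Nodup := by
  have h1 : ((q.zip q.tail).map Prod.fst).Nodup := by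
    rw [map_fst_zip_tail]
    exact h.sublist (List.dropLast_sublist q)
  exact h1.of_map

lemma map_pair_sublist {V : Type*} (p : List V) :
    List.Sublist (p.map (fun v => (Sum.inl v, Sum.inr v)))
      ((splitList p).zip (splitList p).tail) := by
  induction p with
  | nil => simp
  | cons v p ih =>
    simp only [List.map_cons, splitList, List.tail_cons, List.zip_cons_cons]
    refine List.Sublist.cons₂ _ ?_
    cases p with
    | nil => simp [splitList]
    | cons w p =>
      simp only [splitList, List.zip_cons_cons]
      refine List.Sublist.cons _ ?_
      simpa [splitList] using ih

lemma nodup_of_zip_nodup {V : Type*} {p : List V}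
    (h : (((splitList p).zip (splitList p).tail)).Nodup) : p.Nodup := by
  have h1 := h.sublist (map_pair_sublist p)
  exact h1.of_map

lemma exists_split {V : Type*} (E : V → V → Prop) :
    ∀ (k : ℕ) (s : V) (q : List (V ⊕ V)), q.length = 2 * k + 2 →
      List.Chain' (SplitEdge E) q → q.head? = some (Sum.inl s) →
      ∃ p : List V, q = splitList p := by
  intro k
  induction k with
  | zero =>
    intro s q hlen hchain hhead
    match q, hlen with
    | [a, b], _ =>
      simp only [List.head?_cons, Option.some.injEq] at hhead
      subst hhead
      rw [List.Chain', List.isChain_cons_cons] at hchain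
      cases b with
      | inl w => exact absurd hchain.1 (by simp [SplitEdge])
      | inr w =>
        obtain rfl : s = w := hchain.1
        exact ⟨[s], rfl⟩
  | succ k ih =>
    intro s q hlen hchain hhead
    match q with
    | a :: b :: c :: rest =>
      simp only [List.head?_cons, Option.some.injEq] at hhead
      subst hhead
      rw [List.Chain', List.isChain_cons_cons] at hchain
      cases b with
      | inl w => exact absurd hchain.1 (by simp [SplitEdge])
      | inr w =>
        obtain rfl : s = w := hchain.1
        have hchain2 := hchain.2
        rw [List.isChain_cons_cons] at hchain2
        cases c with
        | inr u => exact absurd hchain2.1 (by simp [SplitEdge])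
        | inl u =>
          have hlen' : (Sum.inl u :: rest : List (V ⊕ V)).length = 2 * k + 2 := by
            simp at hlen ⊢; omega
          obtain ⟨p, hp⟩ := ih u (Sum.inl u :: rest) hlen' hchain2.2 rfl
          exact ⟨s :: p, by simp [splitList, hp]⟩

/-- There is a simple path (no repeated nodes) of length `k` from `s` to `t` in `G`
iff there is a trail (no repeated edges) of length `2k+1` from `Head s` to `Tail t`
in the split graph `G'`.  Paths are represented by their lists of nodes. -/
theorem split_graph_simple_path_iff_trail {V : Type*} (E : V → V → Prop) (s t : V) (k : ℕ) :
    (∃ p : List V, List.Chain' E p ∧ p.head? = some s ∧ p.getLast? = some t ∧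
        p.length = k + 1 ∧ p.Nodup) ↔
    (∃ q : List (V ⊕ V), List.Chain' (SplitEdge E) q ∧ q.head? = some (Sum.inl s) ∧
        q.getLast? = some (Sum.inr t) ∧ q.length = (2 * k + 1) + 1 ∧
        (q.zip q.tail).Nodup) := by
  constructor
  · rintro ⟨p, hchain, hhead, hlast, hlen, hnodup⟩
    refine ⟨splitList p, (splitList_chain' E p).2 hchain, ?_, ?_, ?_, ?_⟩
    · rw [splitList_head?, hhead]; rfl
    · rw [splitList_getLast?, hlast]; rfl
    · rw [splitList_length, hlen]; ring
    · exact zip_tail_nodup (splitList_nodup hnodup)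
  · rintro ⟨q, hchain, hhead, hlast, hlen, hnodup⟩
    obtain ⟨p, rfl⟩ := exists_split E k s q (by omega) hchain hhead
    rw [splitList_head?] at hhead
    rw [splitList_getLast?] at hlast
    rw [splitList_length] at hlen
    refine ⟨p, (splitList_chain' E p).1 hchain, ?_, ?_, by omega, nodup_of_zip_nodup hnodup⟩
    · cases hp : p.head? <;> rw [hp] at hhead <;> simp_all
    · cases hp : p.getLast? <;> rw [hp] at hlast <;> simp_all
end

section
/- Let G be a directed graph whose every edge is labeled a, except for a single edge labeled b going from node t₁ to node s₂. Then there exists a simple path from s₁ to t₂ in G whose label word matches the regular expression a*ba* if and only if there exist two node-disjoint simple paths in the a-labeled subgraph, one from s₁ to t₁ and one from s₂ to t₂. -/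
/-- `LabeledPath E s t p` means `p` is a list of labeled edges of `E` forming a
path from `s` to `t` (the empty path exists exactly when `s = t`). -/
def LabeledPath {V A : Type*} (E : Set (V × A × V)) : V → V → List (V × A × V) → Prop
  | s, t, [] => s = t
  | s, t, e :: p => e ∈ E ∧ e.1 = s ∧ LabeledPath E e.2.2 t p

lemma LabeledPath.append {V A : Type*} {E : Set (V × A × V)} :
    ∀ {p q : List (V × A × V)} {s u t : V},
      LabeledPath E s u p → LabeledPath E u t q → LabeledPath E s t (p ++ q)
  | [], q, s, u, t, hp, hq => by cases hp; exact hq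
  | e :: p, q, s, u, t, hp, hq =>
    ⟨hp.1, hp.2.1, LabeledPath.append hp.2.2 hq⟩

lemma LabeledPath.split {V A : Type*} {E : Set (V × A × V)} :
    ∀ {p : List (V × A × V)} {e : V × A × V} {q : List (V × A × V)} {s t : V},
      LabeledPath E s t (p ++ e :: q) →
        LabeledPath E s e.1 p ∧ e ∈ E ∧ LabeledPath E e.2.2 t q
  | [], e, q, s, t, h => ⟨h.2.1.symm, h.1, h.2.2⟩
  | f :: p, e, q, s, t, h => by
    obtain ⟨h1, h2, h3⟩ := LabeledPath.split h.2.2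
    exact ⟨⟨h.1, h.2.1, h1⟩, h2, h3⟩

lemma LabeledPath.mono {V A : Type*} {E F : Set (V × A × V)} (hEF : E ⊆ F) :
    ∀ {p : List (V × A × V)} {s t : V}, LabeledPath E s t p → LabeledPath F s t p
  | [], s, t, h => h
  | e :: p, s, t, h => ⟨hEF h.1, h.2.1, LabeledPath.mono hEF h.2.2⟩

lemma LabeledPath.restrict {V A : Type*} {E : Set (V × A × V)} {a : A} :
    ∀ {p : List (V × A × V)} {s t : V}, LabeledPath E s t p →
      (∀ e ∈ p, e.2.1 = a) → LabeledPath {e ∈ E | e.2.1 = a} s t p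
  | [], s, t, h, _ => h
  | e :: p, s, t, h, ha =>
    ⟨⟨h.1, ha e List.mem_cons_self⟩, h.2.1,
      LabeledPath.restrict h.2.2 fun f hf => ha f (List.mem_cons_of_mem _ hf)⟩

lemma LabeledPath.all_a {V A : Type*} {E : Set (V × A × V)} {a : A} :
    ∀ {p : List (V × A × V)} {s t : V}, LabeledPath {e ∈ E | e.2.1 = a} s t p →
      ∀ e ∈ p, e.2.1 = a
  | [], _, _, _, e, he => absurd he List.not_mem_nil
  | f :: p, s, t, h, e, he => by
    rcases List.mem_cons.mp he with rfl | he
    · exact h.1.2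
    · exact LabeledPath.all_a h.2.2 e he

/-- Let every edge of `G` be labeled `a`, except for a single edge `(t₁, b, s₂)`.
Then there is a simple path from `s₁` to `t₂` matching `a*ba*` iff there are two
node-disjoint simple paths in the `a`-labeled subgraph, one from `s₁` to `t₁`
and one from `s₂` to `t₂`. -/
theorem simple_path_astar_b_astar_iff_two_disjoint_paths {V A : Type*}
    (E : Set (V × A × V)) (a b : A) (hab : a ≠ b)
    (s₁ t₁ s₂ t₂ : V) (hdist : [s₁, t₁, s₂, t₂].Nodup)
    (hlabels : ∀ e ∈ E, e.2.1 = a ∨ e.2.1 = b)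
    (hb : (t₁, b, s₂) ∈ E)
    (huniq : ∀ e ∈ E, e.2.1 = b → e = (t₁, b, s₂)) :
    (∃ p, LabeledPath E s₁ t₂ p ∧ (s₁ :: p.map (fun e => e.2.2)).Nodup ∧
        ∃ m n : ℕ, p.map (fun e => e.2.1) =
          List.replicate m a ++ b :: List.replicate n a) ↔
    (∃ p₁ p₂, LabeledPath {e ∈ E | e.2.1 = a} s₁ t₁ p₁ ∧
        (s₁ :: p₁.map (fun e => e.2.2)).Nodup ∧
        LabeledPath {e ∈ E | e.2.1 = a} s₂ t₂ p₂ ∧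
        (s₂ :: p₂.map (fun e => e.2.2)).Nodup ∧
        (s₁ :: p₁.map (fun e => e.2.2)).Disjoint (s₂ :: p₂.map (fun e => e.2.2))) := by
  constructor
  · rintro ⟨p, hp, hnd, m, n, hlab⟩
    rw [show List.replicate m a ++ b :: List.replicate n a =
        List.replicate m a ++ (b :: List.replicate n a) from rfl,
      List.map_eq_append_iff] at hlab
    obtain ⟨q₁, q₂', rfl, hq₁, hq₂'⟩ := hlab
    rw [List.map_eq_cons_iff] at hq₂'
    obtain ⟨e, q₂, rfl, heb, hq₂⟩ := hq₂'
    obtain ⟨hpath₁, heE, hpath₂⟩ := LabeledPath.split hp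
    have he : e = (t₁, b, s₂) := huniq e heE heb
    subst he
    have ha₁ : ∀ f ∈ q₁, f.2.1 = a := fun f hf => by
      have : f.2.1 ∈ List.replicate m a := hq₁ ▸ List.mem_map_of_mem (f := fun e => e.2.1) hf
      exact List.eq_of_mem_replicate this
    have ha₂ : ∀ f ∈ q₂, f.2.1 = a := fun f hf => by
      have : f.2.1 ∈ List.replicate n a := hq₂ ▸ List.mem_map_of_mem (f := fun e => e.2.1) hf
      exact List.eq_of_mem_replicate this
    have hnodes : s₁ :: (q₁ ++ (t₁, b, s₂) :: q₂).map (fun e => e.2.2) =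
        (s₁ :: q₁.map (fun e => e.2.2)) ++ (s₂ :: q₂.map (fun e => e.2.2)) := by
      simp
    rw [hnodes, List.nodup_append] at hnd
    exact ⟨q₁, q₂, LabeledPath.restrict hpath₁ ha₁, hnd.1,
      LabeledPath.restrict hpath₂ ha₂, hnd.2.1, fun x h1 h2 => hnd.2.2 x h1 x h2 rfl⟩
  · rintro ⟨p₁, p₂, hpath₁, hnd₁, hpath₂, hnd₂, hdisj⟩
    refine ⟨p₁ ++ (t₁, b, s₂) :: p₂, ?_, ?_, p₁.length, p₂.length, ?_⟩
    · exact LabeledPath.append (LabeledPath.mono (fun e he => he.1) hpath₁)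
        ⟨hb, rfl, LabeledPath.mono (fun e he => he.1) hpath₂⟩
    · have hnodes : s₁ :: (p₁ ++ (t₁, b, s₂) :: p₂).map (fun e => e.2.2) =
          (s₁ :: p₁.map (fun e => e.2.2)) ++ (s₂ :: p₂.map (fun e => e.2.2)) := by
        simp
      rw [hnodes, List.nodup_append]
      exact ⟨hnd₁, hnd₂, fun x h1 y h2 hxy => by subst hxy; exact hdisj h1 h2⟩
    · have h₁ : p₁.map (fun e => e.2.1) = List.replicate p₁.length a := by
        rw [← List.length_map (fun e => e.2.1)]
        exact List.eq_replicate_of_mem fun x hx => by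
          obtain ⟨f, hf, rfl⟩ := List.mem_map.mp hx
          exact LabeledPath.all_a hpath₁ f hf
      have h₂ : p₂.map (fun e => e.2.1) = List.replicate p₂.length a := by
        rw [← List.length_map (fun e => e.2.1)]
        exact List.eq_replicate_of_mem fun x hx => by
          obtain ⟨f, hf, rfl⟩ := List.mem_map.mp hx
          exact LabeledPath.all_a hpath₂ f hf
      simp [h₁, h₂]
end

section
/- Let G = (V, E) be a directed graph, s, t ∈ V, k ∈ ℕ, and suppose P̂ is (k+1)-representative for the family P of node sets of simple paths of length k from s to v (for each v ∈ V). Then G has a simple path from s to t of length at least k if and only if there exists a node v ∈ V and a set X ∈ P̂ (for some v) such that G has a simple path from s to t of length at least k whose first k + 1 nodes are exactly the set X. -/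
/-- `S'` is a `q`-representative subfamily of `S`. -/
def RepFor {V : Type*} [DecidableEq V] (q : ℕ) (S' S : Set (Finset V)) : Prop :=
  S' ⊆ S ∧ ∀ Y : Finset V, Y.card ≤ q →
    (∃ X ∈ S, Disjoint X Y ∧ (X ∪ Y).card ≤ 2 * q) →
    ∃ X' ∈ S', Disjoint X' Y ∧ (X' ∪ Y).card ≤ 2 * q

/-- `P^{k+1}_{sv}`: the family of node sets of simple paths from `s` to `v` of
length `k` (hence with `k + 1` nodes).  Paths are represented by their node lists. -/
def SimplePathSets {V : Type*} [DecidableEq V] (E : V → V → Prop) (s v : V) (k : ℕ) :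
    Set (Finset V) :=
  {X | ∃ p : List V, List.Chain' E p ∧ p.head? = some s ∧ p.getLast? = some v ∧
      p.Nodup ∧ p.length = k + 1 ∧ p.toFinset = X}

/-- Splitting a list at the last element satisfying `P`. -/
lemma split_at_last_mem {α : Type*} (P : α → Prop) :
    ∀ (l : List α), (∃ x ∈ l, P x) →
      ∃ l₁ w l₂, l = l₁ ++ w :: l₂ ∧ P w ∧ ∀ x ∈ l₂, ¬ P x := by
  intro l
  induction l with
  | nil => rintro ⟨x, hx, -⟩; cases hx
  | cons a l ih =>
    intro h
    by_cases h' : ∃ x ∈ l, P x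
    · obtain ⟨l₁, w, l₂, rfl, hw, hl₂⟩ := ih h'
      exact ⟨a :: l₁, w, l₂, rfl, hw, hl₂⟩
    · push_neg at h'
      obtain ⟨x, hx, hPx⟩ := h
      rcases List.mem_cons.mp hx with rfl | hx
      · exact ⟨[], x, l, rfl, hPx, h'⟩
      · exact absurd hPx (h' x hx)

/-- If `P̂^{k+1}_{sv}` is `(k+1)`-representative for `P^{k+1}_{sv}` for every `v`,
then `G` has a simple path from `s` to `t` of length at least `k` iff there are a
node `v` and a set `X ∈ P̂^{k+1}_{sv}` such that `G` has a simple path from `s` to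
`t` of length at least `k` whose first `k + 1` nodes are exactly the set `X`. -/
theorem representative_sets_long_simple_path {V : Type*} [DecidableEq V]
    (E : V → V → Prop) (s t : V) (k : ℕ) (Phat : V → Set (Finset V))
    (hrep : ∀ v : V, RepFor (k + 1) (Phat v) (SimplePathSets E s v k)) :
    (∃ p : List V, List.Chain' E p ∧ p.head? = some s ∧ p.getLast? = some t ∧
        p.Nodup ∧ k + 1 ≤ p.length) ↔
    (∃ v : V, ∃ X ∈ Phat v, ∃ p : List V, List.Chain' E p ∧ p.head? = some s ∧
        p.getLast? = some t ∧ p.Nodup ∧ k + 1 ≤ p.length ∧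
        (p.take (k + 1)).toFinset = X) := by
  constructor
  · suffices H : ∀ n (p : List V), p.length = n →
        List.Chain' E p → p.head? = some s → p.getLast? = some t → p.Nodup →
        k + 1 ≤ p.length →
        (∃ v : V, ∃ X ∈ Phat v, ∃ p' : List V, List.Chain' E p' ∧ p'.head? = some s ∧
          p'.getLast? = some t ∧ p'.Nodup ∧ k + 1 ≤ p'.length ∧
          (p'.take (k + 1)).toFinset = X) by
      rintro ⟨p, h1, h2, h3, h4, h5⟩
      exact H p.length p rfl h1 h2 h3 h4 h5
    intro n
    induction n using Nat.strong_induction_on with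
    | _ n ih =>
    intro p hlen hchain hhead hlast hnodup hlong
    set A := p.take (k + 1) with hA
    set T := p.drop (k + 1) with hT
    have hAT : A ++ T = p := List.take_append_drop _ _
    have hAlen : A.length = k + 1 := by
      rw [hA, List.length_take]; omega
    have hAne : A ≠ [] := by
      intro h; rw [h] at hAlen; simp at hAlen
    rw [← hAT] at hchain hhead hlast hnodup
    obtain ⟨hcA, hcT, hconn⟩ := List.isChain_append.mp hchain
    obtain ⟨hnodA, hnodT, hdisjAT⟩ := List.nodup_append'.mp hnodup
    set v := A.getLast hAne with hv
    have hAlast : A.getLast? = some v := List.getLast?_eq_getLast _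
    have hAhead : A.head? = some s := by
      rw [List.head?_append] at hhead
      cases hA' : A.head? with
      | none => exact absurd hA' (by simp [List.head?_eq_none_iff, hAne])
      | some a => rw [hA'] at hhead; simpa using hhead
    have hXmem : A.toFinset ∈ SimplePathSets E s v k :=
      ⟨A, hcA, hAhead, hAlast, hnodA, hAlen, rfl⟩
    set d := T.length - (k + 1) with hd
    set Y := (T.drop d).toFinset with hY
    have hYcard : Y.card ≤ k + 1 := by
      refine le_trans (List.toFinset_card_le _) ?_
      rw [List.length_drop]; omega
    have hdisjXY : Disjoint A.toFinset Y := by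
      rw [Finset.disjoint_left]
      intro a ha haY
      rw [List.mem_toFinset] at ha
      rw [hY, List.mem_toFinset] at haY
      exact hdisjAT ha (List.mem_of_mem_drop haY)
    have hcardXY : (A.toFinset ∪ Y).card ≤ 2 * (k + 1) := by
      refine le_trans (Finset.card_union_le _ _) ?_
      have h1 : A.toFinset.card ≤ k + 1 := hAlen ▸ List.toFinset_card_le A
      omega
    obtain ⟨X', hX'mem, hX'disj, -⟩ :=
      (hrep v).2 Y hYcard ⟨A.toFinset, hXmem, hdisjXY, hcardXY⟩
    obtain ⟨q, hcq, hqhead, hqlast, hqnod, hqlen, hqfin⟩ := (hrep v).1 hX'mem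
    have hqne : q ≠ [] := by intro h; rw [h] at hqlen; simp at hqlen
    by_cases hcol : ∃ x ∈ T, x ∈ X'
    · -- collision with the tail: build a strictly shorter witness and recurse
      obtain ⟨T₁, w, T₂, hTsplit, hwX', hT₂⟩ := split_at_last_mem (· ∈ X') T hcol
      have hwq : w ∈ q := by
        rw [← hqfin, List.mem_toFinset] at hwX'; exact hwX'
      obtain ⟨q₁, q₂, hqsplit⟩ := List.append_of_mem hwq
      have hwY : w ∉ T.drop d := by
        intro h
        exact (Finset.disjoint_left.mp hX'disj hwX') (by rw [hY, List.mem_toFinset]; exact h)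
      have hdT₁ : T₁.length + 1 ≤ d := by
        by_contra hc
        push_neg at hc
        apply hwY
        rw [hTsplit, List.drop_append_of_le_length (by omega)]
        simp
      have hTlen : T.length = T₁.length + 1 + T₂.length := by
        rw [hTsplit]; simp; omega
      have hT₂len : k + 1 ≤ T₂.length := by omega
      -- the new path
      set p' := q₁ ++ w :: T₂ with hp'
      -- chain on pieces of q
      rw [hqsplit] at hcq
      obtain ⟨hcq₁, hcwq₂, hconnq⟩ := List.isChain_append.mp hcq
      rw [hTsplit] at hcT
      obtain ⟨-, hcwT₂, -⟩ := List.isChain_append.mp hcT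
      have hc' : List.Chain' E p' := by
        rw [hp']; refine List.isChain_append.mpr ?_
        refine ⟨hcq₁, hcwT₂, ?_⟩
        intro x hx y hy
        simp only [List.head?_cons, Option.mem_def, Option.some.injEq] at hy
        subst hy
        exact hconnq x hx w (by simp)
      have hh' : p'.head? = some s := by
        rw [hqsplit, List.head?_append] at hqhead
        rw [hp', List.head?_append]
        simpa using hqhead
      have hTne : T ≠ [] := by
        intro h; rw [h] at hTsplit; simp at hTsplit
      have hTlast : T.getLast? = some t := by
        rw [List.getLast?_append] at hlast
        cases hT' : T.getLast? with
        | none => exact absurd hT' (by simp [List.getLast?_eq_none_iff, hTne])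
        | some b => rw [hT'] at hlast; simpa using hlast
      have hl' : p'.getLast? = some t := by
        rw [hTsplit, List.getLast?_append] at hTlast
        rw [hp', List.getLast?_append]
        have : (w :: T₂).getLast? ≠ none := by
          simp [List.getLast?_eq_none_iff]
        cases hwT : (w :: T₂).getLast? with
        | none => exact absurd hwT this
        | some b =>
          rw [hwT] at hTlast
          simpa using hTlast
      -- nodup pieces
      rw [hqsplit] at hqnod
      obtain ⟨hnq₁, hnwq₂, hdq⟩ := List.nodup_append'.mp hqnod
      rw [hTsplit] at hnodT
      obtain ⟨-, hnwT₂, -⟩ := List.nodup_append'.mp hnodT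
      have hq₁X' : ∀ x ∈ q₁, x ∈ X' := by
        intro x hx
        rw [← hqfin, List.mem_toFinset, hqsplit]
        exact List.mem_append_left _ hx
      have hn' : p'.Nodup := by
        rw [hp', List.nodup_append']
        refine ⟨hnq₁, hnwT₂, ?_⟩
        intro x hx hx'
        rcases List.mem_cons.mp hx' with rfl | hx'
        · exact hdq hx (by simp)
        · exact hT₂ x hx' (hq₁X' x hx)
      have hlen' : k + 1 ≤ p'.length := by
        rw [hp']; simp; omega
      have hq₁len : q₁.length ≤ k := by
        have : q.length = q₁.length + 1 + q₂.length := by rw [hqsplit]; simp; omega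
        omega
      have hshort : p'.length < n := by
        have hplen : p.length = (k + 1) + T.length := by
          rw [← hAT]; simp [hAlen]
        rw [hp']
        simp only [List.length_append, List.length_cons]
        omega
      exact ih p'.length hshort p' rfl hc' hh' hl' hn' hlen'
    · -- no collision: q ++ T is a witness with prefix set X'
      push_neg at hcol
      refine ⟨v, X', hX'mem, q ++ T, ?_, ?_, ?_, ?_, ?_, ?_⟩
      · refine List.isChain_append.mpr ?_
        refine ⟨hcq, hcT, ?_⟩
        intro x hx y hy
        rw [hqlast] at hx
        obtain rfl : v = x := by simpa using hx
        exact hconn v (by rw [hAlast]; rfl) y hy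
      · rw [List.head?_append]
        cases hq' : q.head? with
        | none => exact absurd hq' (by simp [List.head?_eq_none_iff, hqne])
        | some a =>
          rw [hq'] at hqhead
          simpa using hqhead
      · rw [List.getLast?_append]
        rw [List.getLast?_append] at hlast
        cases hT' : T.getLast? with
        | none =>
          rw [hT'] at hlast
          simp only [Option.none_or] at hlast ⊢
          have hvt : v = t := by rw [hAlast] at hlast; simpa using hlast
          rw [hqlast, hvt]
        | some b =>
          rw [hT'] at hlast
          simpa using hlast
      · rw [List.nodup_append']
        refine ⟨hqnod, hnodT, ?_⟩
        intro x hx hxT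
        exact hcol x hxT (by rw [← hqfin, List.mem_toFinset] at *; exact hx)
      · rw [List.length_append]; omega
      · rw [List.take_left' hqlen, hqfin]
  · rintro ⟨v, X, hX, p, h1, h2, h3, h4, h5, h6⟩
    exact ⟨p, h1, h2, h3, h4, h5⟩
end

section
/- Let G be an edge-labeled directed graph, let N be an NFA with state set Q and transition relation Δ, and let p be a simple path in the product graph G × N (whose nodes are pairs (u, q)). If the language of N is downward closed, then the projection of p to its G-components (replacing each node (u,q) by u) can be shortened to a simple path in G from the projection of p's first node to the projection of p's last node whose label word is still in L(N). -/
/-- Edges of the product of a labeled graph with an NFA transition relation. -/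
def ProdEdge {V Q A : Type*} (E : Set (V × A × V)) (Δ : Set (Q × A × Q)) :
    Set ((V × Q) × A × (V × Q)) :=
  {e | (e.1.1, e.2.1, e.2.2.1) ∈ E ∧ (e.1.2, e.2.1, e.2.2.2) ∈ Δ}

/-- The NFA accepts the word `w`. -/
def NFAAccepts {Q A : Type*} (Δ : Set (Q × A × Q)) (QI QF : Set Q) (w : List A) : Prop :=
  ∃ qI ∈ QI, ∃ qF ∈ QF, ∃ run : List (Q × A × Q),
    LabeledPath Δ qI qF run ∧ run.map (fun e => e.2.1) = w

lemma labeledPath_suffix {V A : Type*} (E : Set (V × A × V)) :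
    ∀ (p : List (V × A × V)) (s t : V), LabeledPath E s t p →
    ∀ x, x ∈ s :: p.map (fun e => e.2.2) →
    ∃ q, q <:+ p ∧ LabeledPath E x t q ∧
      (x :: q.map (fun e => e.2.2)) <:+ (s :: p.map (fun e => e.2.2)) := by
  intro p
  induction p with
  | nil =>
    intro s t hp x hx
    simp at hx
    subst hx
    exact ⟨[], List.suffix_refl _, hp, List.suffix_refl _⟩
  | cons e rest ih =>
    intro s t hp x hx
    obtain ⟨he, he1, hrest⟩ := hp
    rcases List.mem_cons.1 hx with rfl | hx'
    · exact ⟨e :: rest, List.suffix_refl _, ⟨he, he1, hrest⟩, List.suffix_refl _⟩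
    · obtain ⟨q, hq1, hq2, hq3⟩ := ih e.2.2 t hrest x hx'
      exact ⟨q, hq1.trans (List.suffix_cons e rest), hq2,
        hq3.trans (by simpa using List.suffix_cons (e.2.2) (rest.map (fun e => e.2.2)))⟩

lemma labeledPath_shorten {V A : Type*} (E : Set (V × A × V)) :
    ∀ (n : ℕ) (p : List (V × A × V)), p.length ≤ n → ∀ (s t : V), LabeledPath E s t p →
    ∃ p', LabeledPath E s t p' ∧ (s :: p'.map (fun e => e.2.2)).Nodup ∧
      (p'.map (fun e => e.2.1)).Sublist (p.map (fun e => e.2.1)) := by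
  intro n
  induction n with
  | zero =>
    intro p hlen s t hp
    have : p = [] := List.length_eq_zero_iff.1 (Nat.le_zero.1 hlen)
    subst this
    exact ⟨[], hp, by simp, by simp⟩
  | succ n ih =>
    intro p hlen s t hp
    cases p with
    | nil => exact ⟨[], hp, by simp, by simp⟩
    | cons e rest =>
      obtain ⟨he, he1, hrest⟩ := hp
      obtain ⟨p'', hp'', hnd, hsub⟩ := ih rest (by simpa using Nat.lt_succ_iff.1 hlen) e.2.2 t hrest
      by_cases hs : s ∈ e.2.2 :: p''.map (fun e => e.2.2)
      · obtain ⟨q, hq1, hq2, hq3⟩ := labeledPath_suffix E p'' e.2.2 t hp'' s hs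
        refine ⟨q, hq2, hq3.sublist.nodup hnd, ?_⟩
        exact ((hq1.sublist).map _).trans (hsub.trans (List.sublist_cons_self _ _))
      · refine ⟨e :: p'', ⟨he, he1, hp''⟩, ?_, ?_⟩
        · simpa [hs] using hnd
        · simpa using hsub.cons₂ e.2.1

lemma labeledPath_proj {V Q A : Type*} (E : Set (V × A × V)) (Δ : Set (Q × A × Q)) :
    ∀ (p : List ((V × Q) × A × (V × Q))) (sq tq : V × Q),
    LabeledPath (ProdEdge E Δ) sq tq p →
    LabeledPath E sq.1 tq.1 (p.map (fun e => (e.1.1, e.2.1, e.2.2.1))) ∧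
    LabeledPath Δ sq.2 tq.2 (p.map (fun e => (e.1.2, e.2.1, e.2.2.2))) := by
  intro p
  induction p with
  | nil => intro sq tq hp; cases hp; exact ⟨rfl, rfl⟩
  | cons e rest ih =>
    intro sq tq hp
    obtain ⟨⟨heE, heΔ⟩, he1, hrest⟩ := hp
    obtain ⟨h1, h2⟩ := ih e.2.2 tq hrest
    subst he1
    exact ⟨⟨heE, rfl, h1⟩, ⟨heΔ, rfl, h2⟩⟩

/-- If the language of the NFA is downward closed and `p` is a simple path in the
product graph from `(s, q₀)` (with `q₀` initial) to `(t, q_f)` (with `q_f` final),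
then its projection to `G` can be shortened (removing a subsequence of the labels)
to a simple path in `G` from `s` to `t` whose label word is still in `L(N)`. -/
theorem product_projection_shortens_to_simple_path {V Q A : Type*}
    (E : Set (V × A × V)) (Δ : Set (Q × A × Q)) (QI QF : Set Q)
    (hdc : ∀ w, NFAAccepts Δ QI QF w → ∀ v : List A, v.Sublist w → NFAAccepts Δ QI QF v)
    (s t : V) (q₀ qf : Q) (hq₀ : q₀ ∈ QI) (hqf : qf ∈ QF)
    (p : List ((V × Q) × A × (V × Q)))
    (hp : LabeledPath (ProdEdge E Δ) (s, q₀) (t, qf) p)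
    (hsimple : ((s, q₀) :: p.map (fun e => e.2.2)).Nodup) :
    ∃ p' : List (V × A × V), LabeledPath E s t p' ∧
      (s :: p'.map (fun e => e.2.2)).Nodup ∧
      (p'.map (fun e => e.2.1)).Sublist (p.map (fun e => e.2.1)) ∧
      NFAAccepts Δ QI QF (p'.map (fun e => e.2.1)) := by
  obtain ⟨hG, hQ⟩ := labeledPath_proj E Δ p (s, q₀) (t, qf) hp
  obtain ⟨p', hp', hnd, hsub⟩ :=
    labeledPath_shorten E _ (p.map (fun e => (e.1.1, e.2.1, e.2.2.1)))
      le_rfl s t hG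
  have hlabels : ((p.map (fun e => (e.1.1, e.2.1, e.2.2.1))).map (fun e => e.2.1))
      = p.map (fun e => e.2.1) := by
    simp [List.map_map, Function.comp]
  rw [hlabels] at hsub
  have hacc : NFAAccepts Δ QI QF (p.map (fun e => e.2.1)) := by
    refine ⟨q₀, hq₀, qf, hqf, p.map (fun e => (e.1.2, e.2.1, e.2.2.2)), hQ, ?_⟩
    simp [List.map_map, Function.comp]
  exact ⟨p', hp', hnd, hsub, hdc _ hacc _ hsub⟩
end

section
/- Let G = (V, E) be a directed graph, s, t ∈ V, and k ∈ ℕ with the property that G has no simple path from s to t of length at least k that is strictly shorter than some given simple path p from s to t of length r ≥ k. Suppose p = P · e · R · e' · Q where P is the prefix of length k ending at node v_k, Q is the suffix of length k, and R is the middle part, and suppose P' is a simple path from s to v_k of length k that is node-disjoint from Q. Then P' is also node-disjoint from R, and hence P' · e · R · e' · Q is a simple path from s to t of length r. -/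
/-- Exchange step in the analysis of shortest long simple paths.  Let `p` be a
shortest simple path from `s` to `t` among those of length at least `k`, of length
`r > 2k + 1`, decomposed as `P · e · R · e' · Q` with `|P| = |Q| = k`.  If `P'` is a
simple path from `s` to the node `v_k = p[k]` of length `k` that is node-disjoint
from `Q`, then `P'` is also node-disjoint from `R`, and `P' · e · R · e' · Q` is a
simple path from `s` to `t` of length `r`.  Paths are represented by their node
lists; `P' · e · R · e' · Q` is `P' ++ p.drop (k + 1)`. -/
theorem exchange_prefix_of_shortest_long_simple_path {V : Type*}
    (E : V → V → Prop) (s t : V) (k r : ℕ) (p : List V)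
    (hpath : List.Chain' E p) (hhead : p.head? = some s) (hlast : p.getLast? = some t)
    (hnodup : p.Nodup) (hlen : p.length = r + 1) (hkr : 2 * k + 1 < r)
    (hmin : ∀ q : List V, List.Chain' E q → q.head? = some s → q.getLast? = some t →
      q.Nodup → k + 1 ≤ q.length → p.length ≤ q.length)
    (P' : List V)
    (hP'path : List.Chain' E P') (hP'head : P'.head? = some s)
    (hP'last : P'.getLast? = p[k]?) (hP'nodup : P'.Nodup) (hP'len : P'.length = k + 1)
    (hdisj : P'.Disjoint (p.drop (r - k))) :
    P'.Disjoint ((p.drop (k + 1)).take (r - (2 * k + 1))) ∧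
    List.Chain' E (P' ++ p.drop (k + 1)) ∧
    (P' ++ p.drop (k + 1)).head? = some s ∧
    (P' ++ p.drop (k + 1)).getLast? = some t ∧
    (P' ++ p.drop (k + 1)).Nodup ∧
    (P' ++ p.drop (k + 1)).length = r + 1 := by
  classical
  have hedge : ∀ i, (h : i + 1 < p.length) → E (p[i]'(by omega)) (p[i+1]'h) := by
    intro i h
    have := List.isChain_iff_getElem.mp hpath i (by omega)
    simpa using this
  -- last element of p is t, via any nonempty suffix
  have hlast_drop : ∀ n, n < p.length → (p.drop n).getLast? = some t := by
    intro n hn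
    have hne : p.drop n ≠ [] := by
      intro h
      have := congrArg List.length h
      simp at this
      omega
    have : p.getLast? = (p.drop n).getLast? := by
      conv_lhs => rw [← List.take_append_drop n p]
      rw [List.getLast?_append]
      cases h : (p.drop n).getLast? with
      | none => exact absurd (List.getLast?_eq_none_iff.mp h) hne
      | some y => simp
    rw [← this, hlast]
  -- main disjointness claim
  have hD : P'.Disjoint (p.drop (k + 1)) := by
    intro x hxP hxD
    have hex : ∃ j, ∃ hj : j < P'.length, P'[j] ∈ p.drop (k + 1) := by
      obtain ⟨j, hj, rfl⟩ := List.mem_iff_getElem.mp hxP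
      exact ⟨j, hj, hxD⟩
    obtain ⟨hj, hjmem⟩ := Nat.find_spec hex
    set j := Nat.find hex with hjdef
    have hjk : j < k + 1 := by omega
    obtain ⟨m, hm, hpm⟩ := List.mem_iff_getElem.mp hjmem
    have hm' : k + 1 + m < p.length := by
      have := List.length_drop (i := k+1) (l := p)
      omega
    have hpi : p[k+1+m]'hm' = P'[j] := by
      rw [← hpm]; simp
    set i := k + 1 + m with hidef
    -- i < r - k, otherwise contradict hdisj
    have hik : i < r - k := by
      by_contra h
      have h1 : i - (r - k) < (p.drop (r - k)).length := by
        rw [List.length_drop]; omega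
      have h2 : p[i]'hm' ∈ p.drop (r - k) := by
        have : (p.drop (r - k))[i - (r - k)]'h1 = p[i]'hm' := by
          simp only [List.getElem_drop]
          congr 1
          omega
        exact this ▸ List.getElem_mem h1
      exact hdisj (hpi ▸ List.getElem_mem hj) (hpi ▸ h2)
    -- the shorter path
    set q : List V := P'.take (j + 1) ++ p.drop (i + 1) with hqdef
    have hdropne : p.drop (i + 1) ≠ [] := by
      intro h
      have := congrArg List.length h
      simp at this
      omega
    have htake_last : (P'.take (j + 1)).getLast? = some (P'[j]'hj) := by
      rw [List.take_succ, List.getElem?_eq_getElem hj]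
      simp only [Option.toList_some]
      exact List.getLast?_concat
    have hq_chain : List.Chain' E q := by
      refine List.IsChain.append (hP'path.prefix (List.take_prefix _ _))
        (hpath.suffix (List.drop_suffix _ _)) ?_
      intro x hx y hy
      rw [htake_last] at hx
      rw [List.head?_drop, List.getElem?_eq_getElem (by omega : i + 1 < p.length)] at hy
      simp only [Option.mem_def, Option.some.injEq] at hx hy
      subst hx; subst hy
      rw [← hpi]
      exact hedge i (by omega)
    have hq_head : q.head? = some s := by
      rw [hqdef, List.head?_append]
      have : (P'.take (j+1)).head? = some s := by
        rw [List.head?_eq_getElem?, List.getElem?_take, if_pos (by omega : 0 < j + 1),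
          ← List.head?_eq_getElem?, hP'head]
      rw [this]
      rfl
    have hq_last : q.getLast? = some t := by
      rw [hqdef, List.getLast?_append, hlast_drop (i+1) (by omega)]
      rfl
    have hmemup : ∀ z, z ∈ p.drop (i + 1) → z ∈ p.drop (k + 1) := by
      intro z hz
      apply List.mem_of_mem_drop (i := m + 1)
      rw [List.drop_drop]
      have : k + 1 + (m + 1) = i + 1 := by omega
      rwa [this]
    have hq_nodup : q.Nodup := by
      rw [hqdef, List.nodup_append']
      refine ⟨hP'nodup.sublist (List.take_sublist _ _),
        hnodup.sublist (List.drop_sublist _ _), ?_⟩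
      intro y hy1 hy2
      rw [List.take_succ, List.getElem?_eq_getElem hj] at hy1
      simp only [Option.toList_some, List.mem_append, List.mem_singleton] at hy1
      rcases hy1 with hy1 | rfl
      · obtain ⟨m', hm'', hym⟩ := List.mem_iff_getElem.mp hy1
        have hm'j : m' < j := by
          have := List.length_take (i := j) (l := P')
          simp at hm''
          omega
        have hm'P : m' < P'.length := by omega
        have : P'[m']'hm'P ∈ p.drop (k+1) := by
          have : (P'.take j)[m']'hm'' = P'[m']'hm'P := by simp
          rw [← this, hym]
          exact hmemup y hy2
        exact Nat.find_min hex hm'j ⟨hm'P, this⟩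
      · -- y = P'[j] = p[i], but p[i] ∉ p.drop (i+1)
        have hpin : (p[i]'hm') ∈ p.take (i + 1) := by
          rw [List.mem_iff_getElem]
          refine ⟨i, by rw [List.length_take]; omega, by simp⟩
        have hdisj2 : (p.take (i+1)).Disjoint (p.drop (i+1)) := by
          have := hnodup
          rw [← List.take_append_drop (i+1) p, List.nodup_append'] at this
          exact this.2.2
        exact hdisj2 hpin (hpi ▸ hy2)
    have hq_len : q.length = (j + 1) + (r - i) := by
      rw [hqdef, List.length_append, List.length_take, List.length_drop, hlen]
      omega
    have := hmin q hq_chain hq_head hq_last hq_nodup (by omega)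
    rw [hq_len, hlen] at this
    omega
  -- now the conclusions
  refine ⟨fun x hx hx2 => hD hx (List.mem_of_mem_take hx2), ?_, ?_, ?_, ?_, ?_⟩
  · refine List.IsChain.append hP'path (hpath.suffix (List.drop_suffix _ _)) ?_
    intro x hx y hy
    rw [hP'last, List.getElem?_eq_getElem (by omega : k < p.length)] at hx
    rw [List.head?_drop, List.getElem?_eq_getElem (by omega : k + 1 < p.length)] at hy
    simp only [Option.mem_def, Option.some.injEq] at hx hy
    subst hx; subst hy
    exact hedge k (by omega)
  · rw [List.head?_append, hP'head]; rfl
  · rw [List.getLast?_append, hlast_drop (k+1) (by omega)]; rfl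
  · exact List.nodup_append'.mpr ⟨hP'nodup, hnodup.sublist (List.drop_sublist _ _), hD⟩
  · rw [List.length_append, List.length_drop, hP'len, hlen]; omega
end
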